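/- Let L₁ and L₂ be finite lattices with Dim(L₁) = m and Dim(L₂) = n, let L = L₁ ]ᵇₐ L₂ be their adjunct with respect to a pair a < b in L₁ with b not covering a, and suppose m < n. Then Dim(L) = n. -/

import Mathlib

/-- A family of `t` relations is a *realizer* of the relation `le`:
each member is a linear order (on the whole ground set) and their
intersection is exactly `le`.  (In particular each member extends `le`.) -/
def IsRealizer {α : Type*} (le : α → α → Prop) {t : ℕ}
    (R : Fin t → α → α → Prop) : Prop :=
  (∀ i, IsLinearOrder α (R i)) ∧ ∀ x y, le x y ↔ ∀ i, R i x y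

/-- The Dushnik–Miller order dimension of the relation `le`: the least
positive number `t` of linear extensions whose intersection is `le`. -/
noncomputable def orderDim {α : Type*} (le : α → α → Prop) : ℕ :=
  sInf {t | 0 < t ∧ ∃ R : Fin t → α → α → Prop, IsRealizer le R}

/-- An element of a poset is doubly irreducible if it has at most one lower
cover and at most one upper cover. -/
def DoublyIrreducible {α : Type*} [PartialOrder α] (z : α) : Prop :=
  {w | w ⋖ z}.Subsingleton ∧ {w | z ⋖ w}.Subsingleton

/-- An element is reducible if it is not doubly irreducible. -/
def Reducible {α : Type*} [PartialOrder α] (z : α) : Prop :=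
  ¬ DoublyIrreducible z

/-- A lattice is an RC-lattice if any two of its reducible elements are
comparable. -/
def IsRCLattice (α : Type*) [Lattice α] : Prop :=
  ∀ x y : α, Reducible x → Reducible y → (x ≤ y ∨ y ≤ x)


/-- The ground set of the complete fundamental basic block `L_r`:
the chain `A₁ ≺ x₁ ≺ A₂ ≺ ⋯ ≺ x_{r-1} ≺ A_r` (of length `2r-1`,
`A_{i+1}` sitting at position `2i`, `x_{i+1}` at position `2i+1`),
together with the doubly irreducible elements `c_{ij}` for `1 ≤ i < j ≤ r`. -/
def Lr (r : ℕ) : Type :=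
  Fin (2 * r - 1) ⊕ {p : Fin r × Fin r // (p.1 : ℕ) < (p.2 : ℕ)}

namespace Lr

/-- The order of `L_r`: on the chain it is the usual order; `z ≤ c_{ij}` iff
`z ≤ A_i`; `c_{ij} ≤ z` iff `A_j ≤ z`; `c_{ij} ≤ c_{kl}` iff `(i,j) = (k,l)`
or `j ≤ k`. -/
def le {r : ℕ} (x y : Lr r) : Prop :=
  match x, y with
  | Sum.inl k, Sum.inl k' => (k : ℕ) ≤ (k' : ℕ)
  | Sum.inl k, Sum.inr c => (k : ℕ) ≤ 2 * (c.1.1 : ℕ)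
  | Sum.inr c, Sum.inl k => 2 * (c.1.2 : ℕ) ≤ (k : ℕ)
  | Sum.inr c, Sum.inr c' =>
      ((c.1.1 : ℕ) = (c'.1.1 : ℕ) ∧ (c.1.2 : ℕ) = (c'.1.2 : ℕ)) ∨
        (c.1.2 : ℕ) ≤ (c'.1.1 : ℕ)

instance (r : ℕ) : PartialOrder (Lr r) where
  le := le
  le_refl x := by rcases x with k | ⟨p, hp⟩ <;> simp [le]
  le_trans x y z hxy hyz := by
    rcases x with k | ⟨p, hp⟩ <;> rcases y with k' | ⟨q, hq⟩ <;>
      rcases z with k'' | ⟨t, ht⟩ <;>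
      simp only [le] at hxy hyz ⊢ <;> omega
  le_antisymm x y hxy hyx := by
    rcases x with k | ⟨p, hp⟩ <;> rcases y with k' | ⟨q, hq⟩ <;>
      simp only [le] at hxy hyx
    · exact congrArg Sum.inl (Fin.ext (by omega))
    · omega
    · omega
    · have h1 : (p.1 : ℕ) = (q.1 : ℕ) := by omega
      have h2 : (p.2 : ℕ) = (q.2 : ℕ) := by omega
      exact congrArg Sum.inr (Subtype.ext (Prod.ext (Fin.ext h1) (Fin.ext h2)))

/-- The reducible element `A_{i+1}` of `L_r` (`i` is 0-based). -/
def A {r : ℕ} (i : Fin r) : Lr r :=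
  Sum.inl ⟨2 * (i : ℕ), by have := i.2; omega⟩

/-- The doubly irreducible chain element `x_{i+1}` of `L_r` (`i` is 0-based). -/
def X {r : ℕ} (i : Fin (r - 1)) : Lr r :=
  Sum.inl ⟨2 * (i : ℕ) + 1, by have := i.2; omega⟩

/-- The doubly irreducible element `c_{(i+1)(j+1)}` of `L_r`
(`i`, `j` are 0-based). -/
def c {r : ℕ} (i j : Fin r) (h : (i : ℕ) < (j : ℕ)) : Lr r :=
  Sum.inr ⟨(i, j), h⟩

end Lr


/-- The adjunct order `L₁ ]ᵇₐ L₂` on the disjoint union of two ordered sets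
(with respect to the pair `a < b` of the first one):
`x ≤ y` iff both lie in `L₁` and `x ≤ y` there, or both lie in `L₂` and
`x ≤ y` there, or `x ∈ L₁`, `y ∈ L₂` and `x ≤ a`, or `x ∈ L₂`, `y ∈ L₁`
and `b ≤ y`. -/
def adjunctLE {α β : Type*} [LE α] [LE β] (a b : α) :
    α ⊕ β → α ⊕ β → Prop
  | Sum.inl x, Sum.inl y => x ≤ y
  | Sum.inl x, Sum.inr _ => x ≤ a
  | Sum.inr _, Sum.inl y => b ≤ y
  | Sum.inr x, Sum.inr y => x ≤ y

/-- A subset of a lattice is a sublattice if it is closed under `⊔` and `⊓`. -/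
def IsSublatticeSet {α : Type*} [Lattice α] (S : Set α) : Prop :=
  ∀ ⦃x⦄, x ∈ S → ∀ ⦃y⦄, y ∈ S → x ⊔ y ∈ S ∧ x ⊓ y ∈ S

/-- A finite lattice on `n` elements is dismantlable if there is a chain
`L₁ ⊆ L₂ ⊆ ⋯ ⊆ Lₙ` of sublattices with `|Lᵢ| = i` exhausting the lattice. -/
def Dismantlable (α : Type*) [Lattice α] : Prop :=
  ∃ S : Fin (Nat.card α) → Set α,
    (∀ i, IsSublatticeSet (S i)) ∧
    (∀ i j, i ≤ j → S i ⊆ S j) ∧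
    (∀ i, Nat.card (S i) = (i : ℕ) + 1) ∧
    (∀ x : α, ∃ i, x ∈ S i)

/-- The cover graph of a poset: `x` and `y` are adjacent iff one covers the
other. -/
def coverGraph (α : Type*) [PartialOrder α] : SimpleGraph α where
  Adj x y := x ⋖ y ∨ y ⋖ x
  symm := ⟨fun x y h => h.symm⟩
  loopless := ⟨fun x h => by rcases h with h | h <;> exact lt_irrefl x h.lt⟩

/-- The nullity of a poset: (number of covering pairs) − (number of elements)
+ (number of connected components of the cover graph). -/
noncomputable def nullity (α : Type*) [PartialOrder α] : ℤ :=
  (Nat.card {p : α × α // p.1 ⋖ p.2} : ℤ) - (Nat.card α : ℤ) +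
    (Nat.card (coverGraph α).ConnectedComponent : ℤ)

/-- `(a, b)` is an adjunct pair of the lattice `α`: `a < b` and `α` can be
partitioned into nonempty sublattices `K` and `M` with `a, b ∈ K`, `b` not
covering `a` within `K`, such that for `x ∈ K`, `y ∈ M`: `x ≤ y ↔ x ≤ a`
and `y ≤ x ↔ b ≤ x`. -/
def IsAdjunctPair {α : Type*} [Lattice α] (a b : α) : Prop :=
  a < b ∧ ∃ K M : Set α, K.Nonempty ∧ M.Nonempty ∧ Disjoint K M ∧
    K ∪ M = Set.univ ∧ IsSublatticeSet K ∧ IsSublatticeSet M ∧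
    a ∈ K ∧ b ∈ K ∧ (∃ z ∈ K, a < z ∧ z < b) ∧
    ∀ x ∈ K, ∀ y ∈ M, (x ≤ y ↔ x ≤ a) ∧ (y ≤ x ↔ b ≤ x)

/-- `s` is the least upper bound of `x` and `y` with respect to the
relation `le`. -/
def IsLUBRel {γ : Type*} (le : γ → γ → Prop) (x y s : γ) : Prop :=
  le x s ∧ le y s ∧ ∀ z, le x z → le y z → le s z

/-- `s` is the greatest lower bound of `x` and `y` with respect to the
relation `le`. -/
def IsGLBRel {γ : Type*} (le : γ → γ → Prop) (x y s : γ) : Prop :=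
  le s x ∧ le s y ∧ ∀ z, le z x → le z y → le z s

/-- `y` covers `x` with respect to the relation `le`. -/
def RelCovBy {γ : Type*} (le : γ → γ → Prop) (x y : γ) : Prop :=
  le x y ∧ x ≠ y ∧ ∀ z, le x z → le z y → z = x ∨ z = y

section Aux

lemma exists_linext_reversing {α : Type*} [PartialOrder α] (x y : α) (hxy : ¬ x ≤ y) :
    ∃ r : α → α → Prop, IsLinearOrder α r ∧ (∀ u v : α, u ≤ v → r u v) ∧ ¬ r x y := by
  have hpo : IsPartialOrder α (fun u v => u ≤ v ∨ (u ≤ y ∧ x ≤ v)) :=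
    { refl := fun u => Or.inl le_rfl
      trans := by
        rintro u v w (h1 | ⟨h1, h2⟩) (h3 | ⟨h3, h4⟩)
        · exact Or.inl (h1.trans h3)
        · exact Or.inr ⟨h1.trans h3, h4⟩
        · exact Or.inr ⟨h1, h2.trans h3⟩
        · exact absurd (h2.trans h3) hxy
      antisymm := by
        rintro u v (h1 | ⟨h1, h2⟩) (h3 | ⟨h3, h4⟩)
        · exact le_antisymm h1 h3
        · exact absurd ((h4.trans h1).trans h3) hxy
        · exact absurd ((h2.trans h3).trans h1) hxy
        · exact absurd (h2.trans h3) hxy }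
  obtain ⟨s, hs, hrs⟩ := @extend_partialOrder α _ hpo
  haveI := hs
  refine ⟨s, hs, fun u v h => hrs _ _ (Or.inl h), fun hsxy => ?_⟩
  have hsyx : s y x := hrs _ _ (Or.inr ⟨le_rfl, le_rfl⟩)
  have hxy' : x = y := Std.Antisymm.antisymm _ _ hsxy hsyx
  exact hxy (hxy' ▸ le_rfl)

lemma exists_linext_ideal {α : Type*} [PartialOrder α] (a : α) :
    ∃ r : α → α → Prop, IsLinearOrder α r ∧ (∀ u v : α, u ≤ v → r u v) ∧
      ∀ x, r x a → x ≤ a := by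
  classical
  have hpo : IsPartialOrder α (fun u v => u ≤ v ∨ (u ≤ a ∧ ¬ v ≤ a)) :=
    { refl := fun u => Or.inl le_rfl
      trans := by
        rintro u v w (h1 | ⟨h1, h2⟩) (h3 | ⟨h3, h4⟩)
        · exact Or.inl (h1.trans h3)
        · exact Or.inr ⟨h1.trans h3, h4⟩
        · exact Or.inr ⟨h1, fun hw => h2 (h3.trans hw)⟩
        · exact absurd h3 h2
      antisymm := by
        rintro u v (h1 | ⟨h1, h2⟩) (h3 | ⟨h3, h4⟩)
        · exact le_antisymm h1 h3
        · exact absurd (h1.trans h3) h4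
        · exact absurd (h3.trans h1) h2
        · exact absurd h3 h2 }
  obtain ⟨s, hs, hrs⟩ := @extend_partialOrder α _ hpo
  haveI := hs
  refine ⟨s, hs, fun u v h => hrs _ _ (Or.inl h), fun x hxa => ?_⟩
  by_contra hx
  have : s a x := hrs _ _ (Or.inr ⟨le_rfl, hx⟩)
  have hax : x = a := Std.Antisymm.antisymm _ _ hxa this
  exact hx (hax ▸ le_rfl)

lemma exists_realizer (α : Type*) [PartialOrder α] [Finite α] :
    ∃ t : ℕ, 0 < t ∧ ∃ R : Fin t → α → α → Prop,
      IsRealizer ((· ≤ ·) : α → α → Prop) R := by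
  classical
  let P := {p : α × α // ¬ p.1 ≤ p.2}
  let N := Nat.card P
  let e : P ≃ Fin N := Finite.equivFin P
  obtain ⟨s0, hs0, hs0le⟩ := extend_partialOrder ((· ≤ ·) : α → α → Prop)
  choose L hL hLext hLrev using fun p : P => exists_linext_reversing p.1.1 p.1.2 p.2
  refine ⟨N + 1, Nat.succ_pos _,
    fun i => if h : (i : ℕ) < N then L (e.symm ⟨i, h⟩) else s0, fun i => ?_, fun x y => ?_⟩
  · by_cases h : (i : ℕ) < N
    · simpa only [dif_pos h] using hL _
    · simpa only [dif_neg h] using hs0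
  · constructor
    · intro h i
      by_cases hi : (i : ℕ) < N
      · simpa only [dif_pos hi] using hLext _ _ _ h
      · simpa only [dif_neg hi] using hs0le _ _ h
    · intro h
      by_contra hxy
      set p : P := ⟨(x, y), hxy⟩ with hp
      have hlt : ((e p : Fin N) : ℕ) < N := (e p).2
      have := h ⟨(e p : Fin N), Nat.lt_succ_of_lt hlt⟩
      simp only [] at this
      rw [dif_pos hlt] at this
      have hep : (⟨((e p : Fin N) : ℕ), hlt⟩ : Fin N) = e p := Fin.ext rfl
      rw [hep, Equiv.symm_apply_apply] at this
      exact hLrev p this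

def combineRel {α β : Type*} (P : α → α → Prop) (Sr : β → β → Prop) (D : α → Prop) :
    α ⊕ β → α ⊕ β → Prop
  | Sum.inl x, Sum.inl y => P x y
  | Sum.inl x, Sum.inr _ => D x
  | Sum.inr _, Sum.inl x => ¬ D x
  | Sum.inr x, Sum.inr y => Sr x y

lemma combineRel_isLinearOrder {α β : Type*} {P : α → α → Prop} {Sr : β → β → Prop}
    {D : α → Prop} (hP : IsLinearOrder α P) (hS : IsLinearOrder β Sr)
    (hD : ∀ x y, P x y → D y → D x) :
    IsLinearOrder (α ⊕ β) (combineRel P Sr D) := by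
  classical
  haveI := hP; haveI := hS
  refine { refl := ?_, trans := ?_, antisymm := ?_, total := ?_ }
  · rintro (x | x)
    · exact Std.Refl.refl (r := P) x
    · exact Std.Refl.refl (r := Sr) x
  · rintro (x | x) (y | y) (z | z) h1 h2 <;>
      simp only [combineRel] at h1 h2 ⊢
    · exact IsTrans.trans _ _ _ h1 h2
    · exact hD _ _ h1 h2
    · rcases Std.Total.total (r := P) x z with h | h
      · exact h
      · exact absurd (hD _ _ h h1) h2
    · exact h1
    · intro hz; exact h1 (hD _ _ h2 hz)
    · exact absurd h2 h1
    · exact h2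
    · exact IsTrans.trans _ _ _ h1 h2
  · rintro (x | x) (y | y) h1 h2 <;> simp only [combineRel] at h1 h2
    · exact congrArg Sum.inl (Std.Antisymm.antisymm _ _ h1 h2)
    · exact absurd h1 h2
    · exact absurd h2 h1
    · exact congrArg Sum.inr (Std.Antisymm.antisymm _ _ h1 h2)
  · rintro (x | x) (y | y)
    · exact Std.Total.total (r := P) x y
    · exact em (D x)
    · exact (em (D y)).symm.imp id id
    · exact Std.Total.total (r := Sr) x y

end Aux

lemma adjunct_lower {α β : Type*} [LE α] [LE β] {a b : α} {t : ℕ}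
    {T : Fin t → (α ⊕ β) → (α ⊕ β) → Prop} (hT : IsRealizer (adjunctLE a b) T) :
    ∃ Sr : Fin t → β → β → Prop, IsRealizer ((· ≤ ·) : β → β → Prop) Sr := by
  refine ⟨fun i x y => T i (Sum.inr x) (Sum.inr y), fun i => ?_, fun x y => hT.2 (Sum.inr x) (Sum.inr y)⟩
  haveI := hT.1 i
  exact
    { refl := fun x => Std.Refl.refl (r := T i) _
      trans := fun x y z h1 h2 => IsTrans.trans (r := T i) _ _ _ h1 h2
      antisymm := fun x y h1 h2 =>
        Sum.inr_injective (Std.Antisymm.antisymm (r := T i) _ _ h1 h2)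
      total := fun x y => Std.Total.total (r := T i) _ _ }

lemma adjunct_upper {α β : Type*} [PartialOrder α] [PartialOrder β] {a b : α} (hab : a < b)
    {m n : ℕ} (hmn : m < n)
    {R : Fin m → α → α → Prop} (hR : IsRealizer ((· ≤ ·) : α → α → Prop) R)
    {Sr : Fin n → β → β → Prop} (hSr : IsRealizer ((· ≤ ·) : β → β → Prop) Sr) :
    ∃ T : Fin n → (α ⊕ β) → (α ⊕ β) → Prop, IsRealizer (adjunctLE a b) T := by
  classical
  obtain ⟨Q, hQ, hQext, hQa⟩ := exists_linext_ideal (α := α) a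
  set R' : Fin n → α → α → Prop := fun i => if h : (i : ℕ) < m then R ⟨i, h⟩ else Q with hR'
  set D : Fin n → α → Prop := fun i x => if (i : ℕ) < m then ¬ R' i b x else x ≤ a with hD
  have hR'lin : ∀ i, IsLinearOrder α (R' i) := by
    intro i; by_cases h : (i : ℕ) < m
    · simpa only [hR', dif_pos h] using hR.1 _
    · simpa only [hR', dif_neg h] using hQ
  have hR'ext : ∀ (i) (u v : α), u ≤ v → R' i u v := by
    intro i u v huv; by_cases h : (i : ℕ) < m
    · simpa only [hR', dif_pos h] using (hR.2 u v).mp huv _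
    · simpa only [hR', dif_neg h] using hQext u v huv
  have hDdown : ∀ (i) (x y : α), R' i x y → D i y → D i x := by
    intro i x y hxy hDy
    by_cases h : (i : ℕ) < m
    · simp only [hD, if_pos h] at hDy ⊢
      haveI := hR'lin i
      exact fun hbx => hDy (IsTrans.trans (r := R' i) _ _ _ hbx hxy)
    · simp only [hD, if_neg h] at hDy ⊢
      simp only [hR', dif_neg h] at hxy
      haveI := hQ
      exact hQa x (IsTrans.trans (r := Q) _ _ _ hxy (hQext y a hDy))
  have hDle : ∀ (i) (x : α), x ≤ a → D i x := by
    intro i x hxa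
    by_cases h : (i : ℕ) < m
    · simp only [hD, if_pos h]
      intro hbx
      have hxb : R' i x b := hR'ext i x b (hxa.trans hab.le)
      haveI := hR'lin i
      have : x = b := Std.Antisymm.antisymm (r := R' i) _ _ hxb hbx
      exact hab.not_ge (this ▸ hxa)
    · simp only [hD, if_neg h]; exact hxa
  have hDb : ∀ (i) (x : α), b ≤ x → ¬ D i x := by
    intro i x hbx
    by_cases h : (i : ℕ) < m
    · simp only [hD, if_pos h, not_not]
      exact hR'ext i b x hbx
    · simp only [hD, if_neg h]
      exact fun hxa => hab.not_ge (hbx.trans hxa)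
  refine ⟨fun i => combineRel (R' i) (Sr i) (D i),
    fun i => combineRel_isLinearOrder (hR'lin i) (hSr.1 i) (hDdown i), ?_⟩
  rintro (x | x) (y | y)
  · show x ≤ y ↔ ∀ i, R' i x y
    constructor
    · exact fun h i => hR'ext i _ _ h
    · intro h
      refine (hR.2 x y).mpr fun j => ?_
      have hj : ((⟨(j : ℕ), j.2.trans hmn⟩ : Fin n) : ℕ) < m := j.2
      have := h ⟨(j : ℕ), j.2.trans hmn⟩
      simpa only [hR', dif_pos hj, Fin.eta] using this
  · show x ≤ a ↔ ∀ i, D i x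
    constructor
    · exact fun h i => hDle i x h
    · intro h
      have := h ⟨m, hmn⟩
      simpa only [hD, lt_irrefl, if_neg, if_false] using this
  · show b ≤ y ↔ ∀ i, ¬ D i y
    constructor
    · exact fun h i => hDb i y h
    · intro h
      refine (hR.2 b y).mpr fun j => ?_
      have hj : ((⟨(j : ℕ), j.2.trans hmn⟩ : Fin n) : ℕ) < m := j.2
      have := h ⟨(j : ℕ), j.2.trans hmn⟩
      simp only [hD, if_pos hj, not_not, hR', dif_pos hj, Fin.eta] at this
      exact this
  · show x ≤ y ↔ ∀ i, Sr i x y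
    exact hSr.2 x y


/-- if `m = Dim L₁ < n = Dim L₂` then `Dim(L₁ ]ᵇₐ L₂) = n`. -/
theorem dim_adjunct_of_lt {α β : Type*} [Lattice α] [Lattice β]
    [Finite α] [Finite β] {a b : α} (hab : a < b) (hcov : ¬ a ⋖ b)
    {m n : ℕ} (hm : orderDim ((· ≤ ·) : α → α → Prop) = m)
    (hn : orderDim ((· ≤ ·) : β → β → Prop) = n) (hmn : m < n) :
    orderDim (adjunctLE (α := α) (β := β) a b) = n := by
  classical
  have hmmem : m ∈ {t | 0 < t ∧ ∃ R : Fin t → α → α → Prop,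
      IsRealizer ((· ≤ ·) : α → α → Prop) R} := by
    rw [← hm]; exact Nat.sInf_mem (exists_realizer α)
  have hnmem : n ∈ {t | 0 < t ∧ ∃ R : Fin t → β → β → Prop,
      IsRealizer ((· ≤ ·) : β → β → Prop) R} := by
    rw [← hn]; exact Nat.sInf_mem (exists_realizer β)
  obtain ⟨hm0, R, hRreal⟩ := hmmem
  obtain ⟨hn0, Sr, hSreal⟩ := hnmem
  obtain ⟨T, hT⟩ := adjunct_upper hab hmn hRreal hSreal
  refine le_antisymm (Nat.sInf_le ⟨hn0, T, hT⟩) (le_csInf ⟨n, hn0, T, hT⟩ ?_)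
  rintro t ⟨ht0, T', hT'⟩
  obtain ⟨Sr', hSr'⟩ := adjunct_lower hT'
  rw [← hn]
  exact Nat.sInf_le ⟨ht0, Sr', hSr'⟩
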